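/- Let T be a neutral tree on n₁ ≥ 7 vertices, and let T† be obtained from T by the leaf-connecting operation: attach d_v new leaf vertices to each vertex v of T, then pair up all new leaves and join each pair by an edge. Then T† is neutral, i.e. 4|E†| · Σ_{ij ∈ E†} d_i d_j = (Σ_{ij ∈ E†}(d_i + d_j))². Moreover |V†| = 3n₁ − 2 and T† is not a tree. -/

import Mathlib

open Finset

attribute [local instance] Classical.propDecidable

namespace Neutral

/-- Number of edges of `G`. -/
noncomputable def m {V : Type*} [Fintype V] (G : SimpleGraph V) : ℕ :=
  G.edgeFinset.card

/-- `∑_{uv ∈ E} d_u · d_v`, each edge counted once. -/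
noncomputable def dd {V : Type*} [Fintype V] (G : SimpleGraph V) : ℕ :=
  ∑ e ∈ G.edgeFinset,
    Sym2.lift ⟨fun u v => G.degree u * G.degree v, fun _ _ => Nat.mul_comm _ _⟩ e

/-- `∑_{uv ∈ E} (d_u + d_v)`, each edge counted once. -/
noncomputable def ds {V : Type*} [Fintype V] (G : SimpleGraph V) : ℕ :=
  ∑ e ∈ G.edgeFinset,
    Sym2.lift ⟨fun u v => G.degree u + G.degree v, fun _ _ => Nat.add_comm _ _⟩ e

/-- `∑_{uv ∈ E} (d_u² + d_v²)`, each edge counted once. -/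
noncomputable def dsq {V : Type*} [Fintype V] (G : SimpleGraph V) : ℕ :=
  ∑ e ∈ G.edgeFinset,
    Sym2.lift ⟨fun u v => G.degree u ^ 2 + G.degree v ^ 2, fun _ _ => Nat.add_comm _ _⟩ e

/-- A graph is irregular if it is not regular of any degree. -/
def Irregular {V : Type*} [Fintype V] (G : SimpleGraph V) : Prop :=
  ¬ ∃ k, G.IsRegularOfDegree k

end Neutral

open Neutral

namespace Neutral

/-- The index type of the new leaves in the leaf-connecting operation:
`d_v` new leaves are attached to every vertex `v`. -/
noncomputable def Leaves {V : Type*} [Fintype V] (G : SimpleGraph V) : Type _ :=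
  Σ v : V, Fin (G.degree v)

noncomputable instance {V : Type*} [Fintype V] (G : SimpleGraph V) : Fintype (Leaves G) := by
  unfold Leaves; infer_instance

/-- One-directional adjacency for the leaf-connecting operation: the old edges of `G`
are kept, each new leaf is attached to its base vertex, and the new leaves are paired
up by the matching `σ`. -/
def lcS {V : Type*} [Fintype V] (G : SimpleGraph V) (σ : Leaves G → Leaves G) :
    (V ⊕ Leaves G) → (V ⊕ Leaves G) → Prop
  | Sum.inl u, Sum.inl v => G.Adj u v
  | Sum.inl u, Sum.inr l => l.1 = u
  | Sum.inr a, Sum.inr b => σ a = b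
  | _, _ => False

/-- The graph `G†` produced by the leaf-connecting operation with matching `σ`. -/
noncomputable def LeafConn {V : Type*} [Fintype V] (G : SimpleGraph V)
    (σ : Leaves G → Leaves G) : SimpleGraph (V ⊕ Leaves G) where
  Adj x y := x ≠ y ∧ (lcS G σ x y ∨ lcS G σ y x)
  symm := ⟨fun _ _ h => ⟨Ne.symm h.1, h.2.symm⟩⟩
  loopless := ⟨fun _ h => h.1 rfl⟩

end Neutral


namespace Neutral

section Aux
open Finset

variable {α : Type*} [Fintype α]

lemma double_sum (G : SimpleGraph α) (f : α → α → ℕ) (hf : ∀ u v, f u v = f v u) :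
    2 * ∑ e ∈ G.edgeFinset, Sym2.lift ⟨f, hf⟩ e
      = ∑ x : α, ∑ y ∈ G.neighborFinset x, f x y := by
  classical
  have key : ∑ p ∈ (univ : Finset (α × α)).filter (fun p => G.Adj p.1 p.2), f p.1 p.2
      = ∑ e ∈ G.edgeFinset, 2 * Sym2.lift ⟨f, hf⟩ e := by
    rw [← Finset.sum_fiberwise_of_maps_to (g := fun p : α × α => Sym2.mk p.1 p.2)
      (t := G.edgeFinset) (by
        intro p hp
        simp only [mem_filter] at hp
        simpa [SimpleGraph.mem_edgeFinset] using hp.2)]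
    refine Finset.sum_congr rfl ?_
    intro e he
    induction e with
    | _ u v =>
      have hadj : G.Adj u v := by simpa [SimpleGraph.mem_edgeFinset] using he
      have hne : u ≠ v := hadj.ne
      have hfib : (univ : Finset (α × α)).filter
          (fun p => G.Adj p.1 p.2 ∧ Sym2.mk p.1 p.2 = s(u, v)) = {(u, v), (v, u)} := by
        ext ⟨x, y⟩
        simp only [mem_filter, mem_univ, true_and, mem_insert, mem_singleton,
          Prod.mk.injEq, Sym2.eq_iff]
        constructor
        · rintro ⟨_, (⟨rfl, rfl⟩ | ⟨rfl, rfl⟩)⟩ <;> simp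
        · rintro (⟨rfl, rfl⟩ | ⟨rfl, rfl⟩)
          · exact ⟨hadj, Or.inl ⟨rfl, rfl⟩⟩
          · exact ⟨hadj.symm, Or.inr ⟨rfl, rfl⟩⟩
      rw [Finset.filter_filter, hfib,
        Finset.sum_pair (by simp [Prod.ext_iff, hne])]
      simp [Sym2.lift_mk, hf v u, two_mul]
  have lhs : ∑ p ∈ (univ : Finset (α × α)).filter (fun p => G.Adj p.1 p.2), f p.1 p.2
      = ∑ x : α, ∑ y ∈ G.neighborFinset x, f x y := by
    rw [Finset.sum_filter, Fintype.sum_prod_type]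
    refine Finset.sum_congr rfl fun x _ => ?_
    rw [SimpleGraph.neighborFinset_eq_filter, Finset.sum_filter]
  rw [Finset.mul_sum, ← key, lhs]

lemma nbr_sum (G : SimpleGraph α) (g : α → ℕ) :
    ∑ x : α, ∑ y ∈ G.neighborFinset x, g y = ∑ y : α, G.degree y * g y := by
  classical
  simp only [SimpleGraph.neighborFinset_eq_filter, Finset.sum_filter]
  rw [Finset.sum_comm]
  refine Finset.sum_congr rfl fun y _ => ?_
  rw [← Finset.sum_filter]
  have : (univ : Finset α).filter (fun x => G.Adj x y) = G.neighborFinset y := by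
    ext x; simp [SimpleGraph.adj_comm]
  rw [this, Finset.sum_const, SimpleGraph.card_neighborFinset_eq_degree, smul_eq_mul]

lemma two_ds (G : SimpleGraph α) :
    2 * ds G = ∑ x : α, ∑ y ∈ G.neighborFinset x, (G.degree x + G.degree y) :=
  double_sum G _ _

lemma two_dd (G : SimpleGraph α) :
    2 * dd G = ∑ x : α, ∑ y ∈ G.neighborFinset x, (G.degree x * G.degree y) :=
  double_sum G _ _

lemma sum_deg (G : SimpleGraph α) : ∑ v : α, G.degree v = 2 * m G := by
  simpa [m] using G.sum_degrees_eq_twice_card_edges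

lemma ds_eq_sum_sq (G : SimpleGraph α) : ds G = ∑ v : α, G.degree v ^ 2 := by
  have h := two_ds G
  have h2 : ∑ x : α, ∑ y ∈ G.neighborFinset x, (G.degree x + G.degree y)
      = (∑ x : α, G.degree x * G.degree x) + ∑ x : α, G.degree x * G.degree x := by
    have e1 : ∀ x : α, ∑ y ∈ G.neighborFinset x, (G.degree x + G.degree y)
        = G.degree x * G.degree x + ∑ y ∈ G.neighborFinset x, G.degree y := by
      intro x
      rw [Finset.sum_add_distrib, Finset.sum_const, SimpleGraph.card_neighborFinset_eq_degree,
        smul_eq_mul]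
    simp only [e1]
    rw [Finset.sum_add_distrib, nbr_sum]
  rw [h2] at h
  have : ∀ x : α, G.degree x * G.degree x = G.degree x ^ 2 := fun x => (sq _).symm
  simp only [this] at h
  omega

end Aux

section LC
open Finset

variable {V : Type*} [Fintype V] (G : SimpleGraph V) (σ : Leaves G → Leaves G)
  (hinv : Function.Involutive σ) (hnf : ∀ a, σ a ≠ a)

lemma adj_ll {u v : V} : (LeafConn G σ).Adj (Sum.inl u) (Sum.inl v) ↔ G.Adj u v := by
  constructor
  · rintro ⟨hne, h | h⟩
    · exact h
    · exact h.symm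
  · intro h
    exact ⟨by simpa using h.ne, Or.inl h⟩

lemma adj_lr {u : V} {a : Leaves G} :
    (LeafConn G σ).Adj (Sum.inl u) (Sum.inr a) ↔ a.1 = u := by
  constructor
  · rintro ⟨hne, h | h⟩
    · exact h
    · exact h.elim
  · intro h
    exact ⟨by simp, Or.inl h⟩

include hinv hnf in
lemma adj_rr {a b : Leaves G} :
    (LeafConn G σ).Adj (Sum.inr a) (Sum.inr b) ↔ σ a = b := by
  constructor
  · rintro ⟨hne, h | h⟩
    · exact h
    · exact h ▸ hinv b
  · intro h
    refine ⟨fun hab => hnf a ?_, Or.inl h⟩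
    · injection hab with hab'
      exact h.trans hab'.symm

lemma nbrl (v : V) : (LeafConn G σ).neighborFinset (Sum.inl v)
    = ((G.neighborFinset v).map ⟨Sum.inl, Sum.inl_injective⟩).disjUnion
      ((univ : Finset (Fin (G.degree v))).map
        ⟨fun i : Fin (G.degree v) => (Sum.inr (⟨v, i⟩ : Leaves G) : V ⊕ Leaves G), (show Function.Injective (fun i : Fin (G.degree v) => (Sum.inr (⟨v, i⟩ : Leaves G) : V ⊕ Leaves G)) from fun i j h => eq_of_heq (Sigma.mk.inj (Sum.inr_injective h)).2)⟩)
      (by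
        rw [Finset.disjoint_left]
        rintro x hx hy
        simp only [mem_map, Function.Embedding.coeFn_mk] at hx hy
        obtain ⟨u, _, rfl⟩ := hx
        obtain ⟨i, _, h⟩ := hy
        exact absurd h (by simp)) := by
  ext x
  cases x with
  | inl u =>
      simp only [SimpleGraph.mem_neighborFinset, mem_disjUnion, mem_map, mem_univ, true_and,
        Function.Embedding.coeFn_mk]
      rw [adj_ll]
      constructor
      · intro h
        exact Or.inl ⟨u, h, rfl⟩
      · rintro (⟨w, hw, hh⟩ | ⟨i, hh⟩)
        · injection hh with hh'
          subst hh'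
          exact hw
        · exact absurd hh (by simp)
  | inr a =>
      simp only [SimpleGraph.mem_neighborFinset, mem_disjUnion, mem_map, mem_univ, true_and,
        Function.Embedding.coeFn_mk]
      rw [adj_lr]
      constructor
      · intro h
        exact Or.inr ⟨h ▸ a.2, by cases a; cases h; rfl⟩
      · rintro (⟨u, _, h⟩ | ⟨i, h⟩)
        · exact absurd h (by simp)
        · injection h with h'
          rw [← h']

include hinv hnf in
lemma nbrr (a : Leaves G) : (LeafConn G σ).neighborFinset (Sum.inr a)
    = {Sum.inl a.1, Sum.inr (σ a)} := by
  ext x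
  cases x with
  | inl u =>
      simp only [SimpleGraph.mem_neighborFinset, mem_insert, mem_singleton]
      rw [(LeafConn G σ).adj_comm, adj_lr]
      simp [eq_comm]
  | inr b =>
      simp only [SimpleGraph.mem_neighborFinset, mem_insert, mem_singleton]
      rw [adj_rr G σ hinv hnf]
      simp [eq_comm]

include hinv hnf in
lemma sum_nbrr (F : V ⊕ Leaves G → ℕ) (a : Leaves G) :
    ∑ y ∈ (LeafConn G σ).neighborFinset (Sum.inr a), F y
      = F (Sum.inl a.1) + F (Sum.inr (σ a)) := by
  rw [nbrr G σ hinv hnf, Finset.sum_pair (by simp)]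

lemma sum_nbrl (F : V ⊕ Leaves G → ℕ) (v : V) :
    ∑ y ∈ (LeafConn G σ).neighborFinset (Sum.inl v), F y
      = (∑ u ∈ G.neighborFinset v, F (Sum.inl u))
        + ∑ i : Fin (G.degree v), F (Sum.inr (⟨v, i⟩ : Leaves G)) := by
  rw [nbrl, Finset.sum_disjUnion, Finset.sum_map, Finset.sum_map]
  rfl

include hinv hnf in
lemma deg_inr (a : Leaves G) : (LeafConn G σ).degree (Sum.inr a) = 2 := by
  rw [← SimpleGraph.card_neighborFinset_eq_degree, nbrr G σ hinv hnf]
  rw [Finset.card_pair (by simp)]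

lemma deg_inl (v : V) : (LeafConn G σ).degree (Sum.inl v) = 2 * G.degree v := by
  rw [← SimpleGraph.card_neighborFinset_eq_degree, nbrl, Finset.card_disjUnion,
    Finset.card_map, Finset.card_map, Finset.card_univ, Fintype.card_fin,
    SimpleGraph.card_neighborFinset_eq_degree, two_mul]

lemma card_leaves : Fintype.card (Leaves G) = ∑ v : V, G.degree v := by
  unfold Leaves
  simp [Fintype.card_sigma]

lemma sum_leaves (g : Leaves G → ℕ) :
    ∑ a : Leaves G, g a = ∑ v : V, ∑ i : Fin (G.degree v), g ⟨v, i⟩ := by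
  show ∑ a : (Σ v : V, Fin (G.degree v)), g a = _
  rw [← Finset.univ_sigma_univ]; exact Finset.sum_sigma _ _ _

end LC

end Neutral

/-- if `T` is a neutral tree on `n₁ ≥ 7` vertices and `T†` is obtained by
the leaf-connecting operation (attach `d_v` new leaves to each vertex `v`, then pair up
all new leaves by a perfect matching `σ`), then `T†` is neutral, has `3n₁ - 2`
vertices, and is not a tree. -/
theorem stmt_8 {V : Type*} [Fintype V] (T : SimpleGraph V) (n₁ : ℕ)
    (hcard : Fintype.card V = n₁) (hn : 7 ≤ n₁)
    (htree : T.IsTree) (hneutral : 4 * m T * dd T = (ds T) ^ 2)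
    (σ : Leaves T → Leaves T) (hinv : Function.Involutive σ) (hnf : ∀ a, σ a ≠ a) :
    4 * m (LeafConn T σ) * dd (LeafConn T σ) = (ds (LeafConn T σ)) ^ 2 ∧
      Fintype.card (V ⊕ Leaves T) = 3 * n₁ - 2 ∧
      ¬ (LeafConn T σ).IsTree := by
  classical
  have hsd : ∑ v : V, T.degree v = 2 * m T := sum_deg T
  have hcardL : Fintype.card (Leaves T) = 2 * m T := by rw [card_leaves]; exact hsd
  have hdsq : ds T = ∑ v : V, T.degree v ^ 2 := ds_eq_sum_sq T
  have hmT : m T = n₁ - 1 := by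
    have h := htree.card_edgeFinset
    rw [hcard] at h
    unfold m
    omega
  -- m of the leaf-connected graph
  have hmH : 2 * m (LeafConn T σ) = 8 * m T := by
    have h := sum_deg (LeafConn T σ)
    rw [Fintype.sum_sum_type] at h
    simp only [deg_inl, deg_inr T σ hinv hnf] at h
    rw [← Finset.mul_sum, hsd, Finset.sum_const, Finset.card_univ, hcardL, smul_eq_mul] at h
    omega
  -- dd of the leaf-connected graph
  have hddH : 2 * dd (LeafConn T σ)
      = 8 * dd T + 8 * (∑ v : V, T.degree v ^ 2) + 8 * m T := by
    have h := two_dd (LeafConn T σ)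
    rw [Fintype.sum_sum_type] at h
    simp only [sum_nbrl, sum_nbrr T σ hinv hnf, deg_inl, deg_inr T σ hinv hnf,
      fun v (i : Fin (T.degree v)) => deg_inr T σ hinv hnf ⟨v, i⟩] at h
    have e1 : ∀ v : V, (∑ u ∈ T.neighborFinset v, 2 * T.degree v * (2 * T.degree u))
        + (∑ _i : Fin (T.degree v), 2 * T.degree v * 2)
        = 4 * ∑ u ∈ T.neighborFinset v, T.degree v * T.degree u + 4 * T.degree v ^ 2 := by
      intro v
      rw [Finset.sum_const, Finset.card_univ, Fintype.card_fin, smul_eq_mul, Finset.mul_sum]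
      congr 1
      · exact Finset.sum_congr rfl fun u _ => by ring
      · ring
    simp only [e1] at h
    rw [Finset.sum_add_distrib, ← Finset.mul_sum, ← Finset.mul_sum, ← two_dd T] at h
    have e2 : ∑ a : Leaves T, (2 * (2 * T.degree a.1) + 2 * 2)
        = 4 * (∑ v : V, T.degree v ^ 2) + 4 * (2 * m T) := by
      rw [sum_leaves T (fun a => 2 * (2 * T.degree a.1) + 2 * 2)]
      have e3 : ∀ v : V, ∑ _i : Fin (T.degree v), (2 * (2 * T.degree v) + 2 * 2)
          = 4 * T.degree v ^ 2 + 4 * T.degree v := by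
        intro v
        rw [Finset.sum_const, Finset.card_univ, Fintype.card_fin, smul_eq_mul]
        ring
      simp only [e3]
      rw [Finset.sum_add_distrib, ← Finset.mul_sum, ← Finset.mul_sum, hsd]
    rw [e2] at h
    omega
  -- ds of the leaf-connected graph
  have hdsH : 2 * ds (LeafConn T σ) = 8 * ds T + 16 * m T := by
    have h := two_ds (LeafConn T σ)
    rw [Fintype.sum_sum_type] at h
    simp only [sum_nbrl, sum_nbrr T σ hinv hnf, deg_inl, deg_inr T σ hinv hnf,
      fun v (i : Fin (T.degree v)) => deg_inr T σ hinv hnf ⟨v, i⟩] at h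
    have e1 : ∀ v : V, (∑ u ∈ T.neighborFinset v, (2 * T.degree v + 2 * T.degree u))
        + (∑ _i : Fin (T.degree v), (2 * T.degree v + 2))
        = 2 * ∑ u ∈ T.neighborFinset v, (T.degree v + T.degree u)
          + (2 * T.degree v ^ 2 + 2 * T.degree v) := by
      intro v
      rw [Finset.sum_const, Finset.card_univ, Fintype.card_fin, smul_eq_mul, Finset.mul_sum]
      congr 1
      · exact Finset.sum_congr rfl fun u _ => by ring
      · ring
    simp only [e1] at h
    rw [Finset.sum_add_distrib, ← Finset.mul_sum, ← two_ds T, Finset.sum_add_distrib,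
      ← Finset.mul_sum, ← Finset.mul_sum, hsd] at h
    have e2 : ∑ a : Leaves T, (2 + 2 * T.degree a.1 + (2 + 2))
        = 2 * (∑ v : V, T.degree v ^ 2) + 6 * (2 * m T) := by
      rw [sum_leaves T (fun a => 2 + 2 * T.degree a.1 + (2 + 2))]
      have e3 : ∀ v : V, ∑ _i : Fin (T.degree v), (2 + 2 * T.degree v + (2 + 2))
          = 2 * T.degree v ^ 2 + 6 * T.degree v := by
        intro v
        rw [Finset.sum_const, Finset.card_univ, Fintype.card_fin, smul_eq_mul]
        ring
      simp only [e3]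
      rw [Finset.sum_add_distrib, ← Finset.mul_sum, ← Finset.mul_sum, hsd]
    rw [e2] at h
    rw [← hdsq] at h
    omega
  have hm4 : m (LeafConn T σ) = 4 * m T := by omega
  have hdd4 : dd (LeafConn T σ) = 4 * dd T + 4 * ds T + 4 * m T := by
    rw [← hdsq] at hddH; omega
  have hds4 : ds (LeafConn T σ) = 4 * ds T + 8 * m T := by omega
  refine ⟨?_, ?_, ?_⟩
  · rw [hm4, hdd4, hds4]
    nlinarith [hneutral]
  · rw [Fintype.card_sum, hcard, hcardL, hmT]
    omega
  · intro hT
    have h := hT.card_edgeFinset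
    have hc : Fintype.card (V ⊕ Leaves T) = n₁ + 2 * (n₁ - 1) := by
      rw [Fintype.card_sum, hcard, hcardL, hmT]
    rw [hc] at h
    have h2 : m (LeafConn T σ) + 1 = n₁ + 2 * (n₁ - 1) := h
    rw [hm4, hmT] at h2
    omega
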